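/- For every ε with 0 < ε ≤ 1, there is no subset S of the vertices of the standard (n-1)-simplex with |S| < 1/(3ε) whose affine span contains an ε-approximate center, for n sufficiently large. That is, the coreset size for the ρ-median/center of the standard simplex is Ω(1/ε). -/

import Mathlib

open Finset

lemma aux_coords (n : ℕ) (S : Finset (Fin n)) (o' : EuclideanSpace ℝ (Fin n))
    (h : o' ∈ affineSpan ℝ {x | ∃ i ∈ S, x = EuclideanSpace.single i (1:ℝ)}) :
    (∀ j ∉ S, o' j = 0) ∧ ∑ j ∈ S, o' j = 1 := by
  have hset : {x : EuclideanSpace ℝ (Fin n) | ∃ i ∈ S, x = EuclideanSpace.single i (1:ℝ)}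
      = Set.range (fun i : {i // i ∈ S} => EuclideanSpace.single (i : Fin n) (1:ℝ)) := by
    ext x
    simp only [Set.mem_setOf_eq, Set.mem_range, Subtype.exists]
    exact ⟨fun ⟨i, hi, hx⟩ => ⟨i, hi, hx.symm⟩, fun ⟨i, hi, hx⟩ => ⟨i, hi, hx.symm⟩⟩
  rw [hset] at h
  obtain ⟨s, w, hw, rfl⟩ := eq_affineCombination_of_mem_affineSpan h
  rw [Finset.affineCombination_eq_linear_combination _ _ _ hw]
  have happ : ∀ j : Fin n,
      (∑ i ∈ s, w i • EuclideanSpace.single (i : Fin n) (1:ℝ)) j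
        = ∑ i ∈ s, w i * (if (i : Fin n) = j then 1 else 0) := by
    intro j
    have := map_sum (EuclideanSpace.proj (𝕜 := ℝ) j)
      (fun i => w i • EuclideanSpace.single (i : Fin n) (1:ℝ)) s
    simp only [EuclideanSpace.proj, PiLp.proj_apply] at this
    rw [this]
    refine Finset.sum_congr rfl fun i hi => ?_
    simp [EuclideanSpace.single_apply, eq_comm]
  constructor
  · intro j hj
    rw [happ j]
    apply Finset.sum_eq_zero
    intro i hi
    rw [if_neg, mul_zero]
    intro hij
    exact hj (hij ▸ i.2)
  · calc ∑ j ∈ S, (∑ i ∈ s, w i • EuclideanSpace.single (i : Fin n) (1:ℝ)) j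
        = ∑ j ∈ S, ∑ i ∈ s, w i * (if (i : Fin n) = j then 1 else 0) := by
          exact Finset.sum_congr rfl fun j _ => happ j
      _ = ∑ i ∈ s, ∑ j ∈ S, w i * (if (i : Fin n) = j then 1 else 0) := Finset.sum_comm
      _ = ∑ i ∈ s, w i := by
          refine Finset.sum_congr rfl fun i hi => ?_
          simp [mul_ite, Finset.sum_ite_eq, i.2]
      _ = 1 := hw

set_option maxHeartbeats 1000000 in
open Finset in
theorem simplex_coreset_lower_bound (ε ρ : ℝ) (hε0 : 0 < ε) (hε1 : ε ≤ 1) (hρ : 1 ≤ ρ) :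
    ∃ N : ℕ, ∀ n : ℕ, N ≤ n →
      ∀ S : Finset (Fin n), (S.card : ℝ) < 1 / (3 * ε) →
        ∀ o' : EuclideanSpace ℝ (Fin n),
          o' ∈ affineSpan ℝ {x | ∃ i ∈ S, x = EuclideanSpace.single i (1:ℝ)} →
          ¬ ((∑ i, dist o' (EuclideanSpace.single i (1:ℝ)) ^ ρ) ^ (1/ρ)
              ≤ (1 + ε) * sInf (Set.range fun q : EuclideanSpace ℝ (Fin n) =>
                  (∑ i, dist q (EuclideanSpace.single i (1:ℝ)) ^ ρ) ^ (1/ρ))) := by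
  have hρ0 : 0 < ρ := lt_of_lt_of_le one_pos hρ
  obtain ⟨N, hN⟩ : ∃ N : ℕ, (100 : ℝ) / ε ^ 2 ≤ N := exists_nat_ge _
  refine ⟨max N 1, fun n hn S hS o' ho' hle => ?_⟩
  have hn1 : 1 ≤ n := le_trans (le_max_right _ _) hn
  have hnR : (100 : ℝ) / ε ^ 2 ≤ n := le_trans hN (by exact_mod_cast le_trans (le_max_left _ _) hn)
  obtain ⟨hz, hsum1⟩ := aux_coords n S o' ho'
  -- S nonempty
  have hS0 : S.Nonempty := by
    rcases S.eq_empty_or_nonempty with rfl | h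
    · simp at hsum1
    · exact h
  have hk1 : (1 : ℝ) ≤ S.card := by exact_mod_cast hS0.card_pos
  set k : ℝ := (S.card : ℝ) with hk
  have hk0 : 0 < k := lt_of_lt_of_le one_pos hk1
  -- Cauchy-Schwarz : ∑_{j∈S} o' j ^ 2 ≥ 1/k
  have hCS : 1 / k ≤ ∑ j ∈ S, (o' j) ^ 2 := by
    have h1 : (1:ℝ) = (∑ j ∈ S, o' j) ^ 2 := by rw [hsum1]; ring
    have h2 : (∑ j ∈ S, o' j) ^ 2 ≤ k * ∑ j ∈ S, (o' j) ^ 2 :=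
      sq_sum_le_card_mul_sum_sq
    rw [div_le_iff₀ hk0, ← h1] at *
    nlinarith [h2]
  -- distance lower bound for i ∉ S
  have hdist : ∀ i ∉ S, Real.sqrt (1 + 1/k) ≤ dist o' (EuclideanSpace.single i (1:ℝ)) := by
    intro i hi
    rw [EuclideanSpace.dist_eq]
    apply Real.sqrt_le_sqrt
    have : ∑ j ∈ insert i S, (dist (o' j) ((EuclideanSpace.single i (1:ℝ)) j)) ^ 2
        ≤ ∑ j, (dist (o' j) ((EuclideanSpace.single i (1:ℝ)) j)) ^ 2 :=
      Finset.sum_le_sum_of_subset_of_nonneg (Finset.subset_univ _)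
        (fun j _ _ => sq_nonneg _)
    refine le_trans ?_ this
    rw [Finset.sum_insert hi]
    have hterm : dist (o' i) ((EuclideanSpace.single i (1:ℝ)) i) ^ 2 = 1 := by
      rw [EuclideanSpace.single_apply, if_pos rfl, hz i hi]
      simp [Real.dist_eq]
    rw [hterm]
    have : ∑ j ∈ S, (o' j) ^ 2 ≤ ∑ j ∈ S, (dist (o' j) ((EuclideanSpace.single i (1:ℝ)) j)) ^ 2 := by
      refine Finset.sum_le_sum fun j hj => ?_
      rw [EuclideanSpace.single_apply, if_neg (by rintro rfl; exact hi hj)]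
      simp [Real.dist_eq]
    linarith
  -- abbreviations
  set A : ℝ := Real.sqrt (1 + 1/k) with hA
  have hA0 : 0 ≤ A := Real.sqrt_nonneg _
  -- A ≥ 1 + 3/(8k)
  have hAlb : 1 + (3/8)*(1/k) ≤ A := by
    rw [hA]
    rw [Real.le_sqrt' (by positivity)]
    have hu1 : 1/k ≤ 1 := by
      rw [div_le_one hk0]; exact hk1
    have hu0 : 0 < 1/k := by positivity
    have husq : (1/k) * (1/k) ≤ 1/k := mul_le_of_le_one_right hu0.le hu1
    nlinarith [husq]
  -- k < 1/(3ε), so 3ε < 1/k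
  have h3e : 3 * ε < 1 / k := by
    rw [lt_div_iff₀ hk0]
    rw [lt_div_iff₀ (by positivity : (0:ℝ) < 3 * ε)] at hS
    nlinarith [hS]
  have hAe : 1 + 9*ε/8 ≤ A := by
    have : 9*ε/8 ≤ (3/8)*(1/k) := by linarith
    linarith
  -- n bounds
  have hn0 : (0:ℝ) < n := by positivity
  have hεn : (100:ℝ) ≤ n * ε^2 := (div_le_iff₀ (by positivity)).mp hnR
  have hkn : k < (n:ℝ) := by
    have h1 : (1:ℝ)/(3*ε) ≤ n := by
      rw [div_le_iff₀ (by positivity)]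
      nlinarith [hεn, mul_le_mul_of_nonneg_left hε1 (mul_pos hn0 hε0).le]
    linarith
  -- k/n small
  have hknε : k * 300 ≤ ε * n := by
    have h2 : k * (3*ε) < 1 := by
      rw [lt_div_iff₀ (by positivity : (0:ℝ) < 3 * ε)] at hS; exact hS
    -- k ≤ 1/(3ε) and n ≥ 100/ε² : k*300 ≤ 300/(3ε) = 100/ε ≤ ε·(100/ε²) ≤ ε n
    have h3 : (100:ℝ)/ε ≤ ε * n := by
      rw [div_le_iff₀ hε0]
      calc (100:ℝ) = ε^2 * (100/ε^2) := by field_simp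
        _ ≤ ε^2 * n := by
            apply mul_le_mul_of_nonneg_left hnR (by positivity)
        _ = ε * n * ε := by ring
    have h4 : k * 300 ≤ (100:ℝ)/ε := by
      rw [le_div_iff₀ hε0]
      nlinarith
    linarith
  -- lower bound for the objective at o'
  have hDlb : ((n:ℝ) - k) ^ (1/ρ) * A
      ≤ (∑ i, dist o' (EuclideanSpace.single i (1:ℝ)) ^ ρ) ^ (1/ρ) := by
    have hsum_lb : ((n:ℝ) - k) * A ^ ρ
        ≤ ∑ i, dist o' (EuclideanSpace.single i (1:ℝ)) ^ ρ := by
      have h1 : ∑ i ∈ Sᶜ, A ^ ρ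
          ≤ ∑ i ∈ Sᶜ, dist o' (EuclideanSpace.single i (1:ℝ)) ^ ρ := by
        refine Finset.sum_le_sum fun i hi => ?_
        exact Real.rpow_le_rpow hA0 (hdist i (Finset.mem_compl.mp hi)) hρ0.le
      have h2 : ∑ i ∈ Sᶜ, dist o' (EuclideanSpace.single i (1:ℝ)) ^ ρ
          ≤ ∑ i, dist o' (EuclideanSpace.single i (1:ℝ)) ^ ρ := by
        refine Finset.sum_le_sum_of_subset_of_nonneg (Finset.subset_univ _) fun i _ _ => ?_
        exact Real.rpow_nonneg dist_nonneg _
      have hcard : S.card ≤ n := by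
        simpa using Finset.card_le_card (Finset.subset_univ S)
      have h3 : ∑ i ∈ Sᶜ, A ^ ρ = ((n:ℝ) - k) * A ^ ρ := by
        rw [Finset.sum_const, Finset.card_compl, nsmul_eq_mul, Fintype.card_fin,
          Nat.cast_sub hcard]
      linarith
    calc ((n:ℝ) - k) ^ (1/ρ) * A
        = (((n:ℝ) - k) * A ^ ρ) ^ (1/ρ) := by
          rw [Real.mul_rpow (by linarith) (Real.rpow_nonneg hA0 _)]
          congr 1
          rw [← Real.rpow_mul hA0, mul_one_div_cancel hρ0.ne', Real.rpow_one]
      _ ≤ _ := Real.rpow_le_rpow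
          (mul_nonneg (by linarith) (Real.rpow_nonneg hA0 _)) hsum_lb
          (le_of_lt (by positivity))
  -- upper bound for the infimum via the centroid
  set c : EuclideanSpace ℝ (Fin n) := (WithLp.equiv 2 _).symm (fun _ => (1:ℝ)/n) with hc
  have hcdist : ∀ i : Fin n, dist c (EuclideanSpace.single i (1:ℝ)) ≤ 1 := by
    intro i
    rw [EuclideanSpace.dist_eq]
    refine le_trans (Real.sqrt_le_sqrt ?_) (le_of_eq Real.sqrt_one)
    have hterm : ∀ j : Fin n, dist (c j) ((EuclideanSpace.single i (1:ℝ)) j) ^ 2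
        = (if j = i then (1 - 1/(n:ℝ))^2 - (1/(n:ℝ))^2 else 0) + (1/(n:ℝ))^2 := by
      intro j
      rw [EuclideanSpace.single_apply, Real.dist_eq, show c j = 1/(n:ℝ) from rfl]
      by_cases h : j = i
      · rw [if_pos h, if_pos h]
        have h1n : 1/(n:ℝ) ≤ 1 := by
          rw [div_le_one hn0]; exact_mod_cast hn1
        rw [abs_of_nonpos (by linarith)]
        ring
      · rw [if_neg h, if_neg h, sub_zero, abs_of_nonneg (by positivity)]
        ring
    calc ∑ j, dist (c j) ((EuclideanSpace.single i (1:ℝ)) j) ^ 2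
        = ∑ j : Fin n, ((if j = i then (1 - 1/(n:ℝ))^2 - (1/(n:ℝ))^2 else 0) + (1/(n:ℝ))^2) :=
          Finset.sum_congr rfl fun j _ => hterm j
      _ = ((1 - 1/(n:ℝ))^2 - (1/(n:ℝ))^2) + n * (1/(n:ℝ))^2 := by
          rw [Finset.sum_add_distrib, Finset.sum_ite_eq' Finset.univ i, if_pos (Finset.mem_univ i),
            Finset.sum_const, Finset.card_univ, Fintype.card_fin, nsmul_eq_mul]
      _ ≤ 1 := by
          have h1n : 1/(n:ℝ) ≤ 1 := by rw [div_le_one hn0]; exact_mod_cast hn1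
          have h2 : (n:ℝ) * (1/(n:ℝ))^2 = 1/(n:ℝ) := by field_simp
          rw [h2]
          nlinarith [sq_nonneg (1/(n:ℝ)), div_nonneg (zero_le_one) hn0.le]
  have hInf : sInf (Set.range fun q : EuclideanSpace ℝ (Fin n) =>
      (∑ i, dist q (EuclideanSpace.single i (1:ℝ)) ^ ρ) ^ (1/ρ)) ≤ (n:ℝ) ^ (1/ρ) := by
    have hbdd : BddBelow (Set.range fun q : EuclideanSpace ℝ (Fin n) =>
        (∑ i, dist q (EuclideanSpace.single i (1:ℝ)) ^ ρ) ^ (1/ρ)) := by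
      refine ⟨0, fun x hx => ?_⟩
      obtain ⟨q, rfl⟩ := hx
      exact Real.rpow_nonneg (Finset.sum_nonneg fun i _ => Real.rpow_nonneg dist_nonneg _) _
    have hmem : (∑ i, dist c (EuclideanSpace.single i (1:ℝ)) ^ ρ) ^ (1/ρ) ∈
        Set.range fun q : EuclideanSpace ℝ (Fin n) =>
        (∑ i, dist q (EuclideanSpace.single i (1:ℝ)) ^ ρ) ^ (1/ρ) := ⟨c, rfl⟩
    refine le_trans (csInf_le hbdd hmem) ?_
    have hsum : ∑ i, dist c (EuclideanSpace.single i (1:ℝ)) ^ ρ ≤ (n:ℝ) := by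
      calc ∑ i, dist c (EuclideanSpace.single i (1:ℝ)) ^ ρ
          ≤ ∑ _i : Fin n, (1:ℝ) := Finset.sum_le_sum fun i _ =>
            Real.rpow_le_one dist_nonneg (hcdist i) hρ0.le
        _ = (n:ℝ) := by simp
    exact Real.rpow_le_rpow (Finset.sum_nonneg fun i _ => Real.rpow_nonneg dist_nonneg _)
      hsum (by positivity)
  -- the key numeric inequality
  have hkey : (1 + ε) * (n:ℝ) ^ (1/ρ) < ((n:ℝ) - k) ^ (1/ρ) * A := by
    have hnk0 : (0:ℝ) < (n:ℝ) - k := by linarith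
    have hx0 : (0:ℝ) < 1 - k/(n:ℝ) := by
      rw [sub_pos, div_lt_one hn0]; exact hkn
    have hx1 : 1 - k/(n:ℝ) ≤ 1 := by
      have : 0 ≤ k/(n:ℝ) := by positivity
      linarith
    have hfac : (n:ℝ) ^ (1/ρ) * (1 - k/(n:ℝ)) ≤ ((n:ℝ) - k) ^ (1/ρ) := by
      have heq : ((n:ℝ) - k) = (n:ℝ) * (1 - k/(n:ℝ)) := by field_simp
      rw [heq, Real.mul_rpow hn0.le hx0.le]
      apply mul_le_mul_of_nonneg_left _ (Real.rpow_nonneg hn0.le _)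
      calc 1 - k/(n:ℝ) = (1 - k/(n:ℝ)) ^ (1:ℝ) := (Real.rpow_one _).symm
        _ ≤ (1 - k/(n:ℝ)) ^ (1/ρ) := by
            apply Real.rpow_le_rpow_of_exponent_ge hx0 hx1
            rw [div_le_one hρ0]; exact hρ
    have hnum : (1 + ε) < (1 - k/(n:ℝ)) * (1 + 9*ε/8) := by
      have ht : k/(n:ℝ) ≤ ε/300 := by
        rw [div_le_div_iff₀ hn0 (by norm_num)]
        linarith
      have ht0 : 0 ≤ k/(n:ℝ) := by positivity
      nlinarith [mul_pos hε0 hε0]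
    calc (1 + ε) * (n:ℝ) ^ (1/ρ)
        < ((1 - k/(n:ℝ)) * (1 + 9*ε/8)) * (n:ℝ) ^ (1/ρ) := by
          apply mul_lt_mul_of_pos_right hnum (Real.rpow_pos_of_pos hn0 _)
      _ = ((n:ℝ) ^ (1/ρ) * (1 - k/(n:ℝ))) * (1 + 9*ε/8) := by ring
      _ ≤ ((n:ℝ) - k) ^ (1/ρ) * (1 + 9*ε/8) := by
          apply mul_le_mul_of_nonneg_right hfac (by linarith)
      _ ≤ ((n:ℝ) - k) ^ (1/ρ) * A := by
          apply mul_le_mul_of_nonneg_left hAe (Real.rpow_nonneg hnk0.le _)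
  -- contradiction
  have hfinal : (1 + ε) * sInf (Set.range fun q : EuclideanSpace ℝ (Fin n) =>
      (∑ i, dist q (EuclideanSpace.single i (1:ℝ)) ^ ρ) ^ (1/ρ))
      < (∑ i, dist o' (EuclideanSpace.single i (1:ℝ)) ^ ρ) ^ (1/ρ) := by
    calc (1 + ε) * sInf (Set.range fun q : EuclideanSpace ℝ (Fin n) =>
        (∑ i, dist q (EuclideanSpace.single i (1:ℝ)) ^ ρ) ^ (1/ρ))
        ≤ (1 + ε) * (n:ℝ) ^ (1/ρ) := by
          apply mul_le_mul_of_nonneg_left hInf (by linarith)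
      _ < ((n:ℝ) - k) ^ (1/ρ) * A := hkey
      _ ≤ _ := hDlb
  exact absurd hle (not_le.mpr hfinal)
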